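/- arXiv:1009.2316 — 2 statements merged into one kernel-verified Lean document; each statement's English description precedes it below -/
import Mathlib

section
/- Let n be a positive even integer, g ∈ GL_n(ℝ), and F_1,…,F_k complete oriented flags in ℝⁿ (1 ≤ k ≤ n). Then [gF_1,…,gF_k] = g[F_1,…,F_k] as oriented subspaces, and for k = n, ori(g[F_1,…,F_n]) = ε(g)·ori([F_1,…,F_n]) where ε(g) is the sign of det g. Consequently coco(gF_0,…,gF_n) = ε(g)·coco(F_0,…,F_n) for all complete oriented flags F_0,…,F_n. -/
open Matrix

noncomputable section

/-- Sign of the determinant of the matrix whose columns are `v 0, …, v (n-1)`. -/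
def oriV {n : ℕ} (v : Fin n → (Fin n → ℝ)) : ℝ :=
  Real.sign (Matrix.det (Matrix.of fun i j => v j i))

open Classical in
/-- We represent a complete oriented flag `F` in `ℝⁿ` by a basis `(F 0, …, F (n-1))`:
the flag is `Fⁱ = span(F 0, …, F (i-1))`, oriented by this basis, with the positive
half-space `(Fⁱ)⁺` the one containing `F (i-1)`.  Two bases represent the same
oriented flag iff the transition matrix is upper triangular with positive diagonal.

Given a tuple `W` representing an oriented subspace `⟨W 0, …, W (k-1)⟩` and a flag `F`,
`extVec W F` is the first vector `F d` of the flag not contained in `span W`; it is a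
vector of the positive half-space `(F^{d+1})⁺`, so `snoc W (extVec W F)` represents the
oriented subspace `[⟨W⟩, F]` of Bucher–Monod. -/
def extVec {n k : ℕ} (W : Fin k → (Fin n → ℝ)) (F : Fin n → (Fin n → ℝ)) : Fin n → ℝ :=
  if h : ∃ j, F j ∉ Submodule.span ℝ (Set.range W) then
    F (Fin.find (fun j => F j ∉ Submodule.span ℝ (Set.range W)) h)
  else 0

/-- `bracket (F_1, …, F_k)` is (the canonical representing tuple of) the oriented
`k`-dimensional subspace `[F_1, …, F_k]`, defined inductively by `[F_1] = F_1¹` and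
`[F_1,…,F_k] = [[F_1,…,F_{k-1}], F_k]`. -/
def bracket {n : ℕ} : {k : ℕ} → (Fin k → (Fin n → (Fin n → ℝ))) → (Fin k → (Fin n → ℝ))
  | 0, _ => Fin.elim0
  | (_ + 1), Fs =>
      Fin.snoc (bracket (Fs ∘ Fin.castSucc))
        (extVec (bracket (Fs ∘ Fin.castSucc)) (Fs (Fin.last _)))

/-- `coco(F_0,…,F_n) = ∏_{i=0}^{n} ori([F_0,…,F̂_i,…,F_n])`. -/
def coco {n : ℕ} (Fs : Fin (n + 1) → (Fin n → (Fin n → ℝ))) : ℝ :=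
  ∏ i : Fin (n + 1), oriV (bracket (Fs ∘ i.succAbove))


/-- Sign of the determinant of `g`. -/
def eps {n : ℕ} (g : GL (Fin n) ℝ) : ℝ :=
  Real.sign ((g : Matrix (Fin n) (Fin n) ℝ).det)

private lemma mySign_mul (a b : ℝ) : Real.sign (a * b) = Real.sign a * Real.sign b := by
  rcases lt_trichotomy a 0 with ha | ha | ha <;> rcases lt_trichotomy b 0 with hb | hb | hb <;>
    simp [ha, hb, Real.sign_of_pos, Real.sign_of_neg, mul_pos, mul_pos_of_neg_of_neg,
      mul_neg_of_pos_of_neg, mul_neg_of_neg_of_pos]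

private def glEquiv {n : ℕ} (g : GL (Fin n) ℝ) : (Fin n → ℝ) ≃ₗ[ℝ] (Fin n → ℝ) :=
  LinearEquiv.ofLinear (Matrix.mulVecLin (g : Matrix (Fin n) (Fin n) ℝ))
    (Matrix.mulVecLin ((g⁻¹ : GL (Fin n) ℝ) : Matrix (Fin n) (Fin n) ℝ))
    (by rw [← Matrix.mulVecLin_mul, Units.mul_inv, Matrix.mulVecLin_one])
    (by rw [← Matrix.mulVecLin_mul, Units.inv_mul, Matrix.mulVecLin_one])

private lemma extVec_mulVec {n k : ℕ} (g : GL (Fin n) ℝ) (W : Fin k → (Fin n → ℝ))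
    (F : Fin n → (Fin n → ℝ)) :
    extVec (fun i => (g : Matrix (Fin n) (Fin n) ℝ) *ᵥ W i)
        (fun j => (g : Matrix (Fin n) (Fin n) ℝ) *ᵥ F j)
      = (g : Matrix (Fin n) (Fin n) ℝ) *ᵥ extVec W F := by
  classical
  have hspan : Submodule.span ℝ (Set.range fun i => (g : Matrix (Fin n) (Fin n) ℝ) *ᵥ W i)
      = Submodule.map ((g : Matrix (Fin n) (Fin n) ℝ).mulVecLin)
          (Submodule.span ℝ (Set.range W)) := by
    rw [Submodule.map_span]
    congr 1
    rw [← Set.range_comp]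
    rfl
  have hmem : ∀ x : Fin n → ℝ, ((g : Matrix (Fin n) (Fin n) ℝ) *ᵥ x
      ∈ Submodule.span ℝ (Set.range fun i => (g : Matrix (Fin n) (Fin n) ℝ) *ᵥ W i))
      ↔ x ∈ Submodule.span ℝ (Set.range W) := by
    intro x
    rw [hspan]
    constructor
    · rintro ⟨y, hy, hxy⟩
      have hinj : Function.Injective ((g : Matrix (Fin n) (Fin n) ℝ).mulVecLin) :=
        (glEquiv g).injective
      have : y = x := hinj hxy
      rwa [this] at hy
    · intro h
      exact ⟨x, h, rfl⟩
  unfold extVec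
  by_cases h : ∃ j, F j ∉ Submodule.span ℝ (Set.range W)
  · have h' : ∃ j, (g : Matrix (Fin n) (Fin n) ℝ) *ᵥ F j ∉
        Submodule.span ℝ (Set.range fun i => (g : Matrix (Fin n) (Fin n) ℝ) *ᵥ W i) := by
      simpa only [hmem] using h
    rw [dif_pos h', dif_pos h]
    have key : ∀ (p q : Fin n → Prop) [DecidablePred p] [DecidablePred q] (hpq : p = q)
        (hp : ∃ j, p j) (hq : ∃ j, q j), Fin.find p hp = Fin.find q hq := by
      intro p q _ _ hpq hp hq
      subst hpq
      congr
    rw [key _ _ (funext fun j => propext (not_congr (hmem (F j)))) h' h]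
  · have h' : ¬ ∃ j, (g : Matrix (Fin n) (Fin n) ℝ) *ᵥ F j ∉
        Submodule.span ℝ (Set.range fun i => (g : Matrix (Fin n) (Fin n) ℝ) *ᵥ W i) := by
      simpa only [hmem] using h
    rw [dif_neg h', dif_neg h, Matrix.mulVec_zero]

private lemma bracket_mulVec {n : ℕ} (g : GL (Fin n) ℝ) :
    ∀ {k : ℕ} (Fs : Fin k → (Fin n → (Fin n → ℝ))),
      bracket (fun i j => (g : Matrix (Fin n) (Fin n) ℝ) *ᵥ Fs i j)
        = fun i => (g : Matrix (Fin n) (Fin n) ℝ) *ᵥ bracket Fs i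
  | 0, Fs => funext fun i => i.elim0
  | (k + 1), Fs => by
      show Fin.snoc _ _ = _
      have ih := bracket_mulVec g (Fs ∘ Fin.castSucc)
      have h1 : bracket ((fun i j => (g : Matrix (Fin n) (Fin n) ℝ) *ᵥ Fs i j) ∘ Fin.castSucc)
          = fun i => (g : Matrix (Fin n) (Fin n) ℝ) *ᵥ bracket (Fs ∘ Fin.castSucc) i := ih
      rw [h1, extVec_mulVec g]
      exact (Fin.comp_snoc (fun x => (g : Matrix (Fin n) (Fin n) ℝ) *ᵥ x)
        (bracket (Fs ∘ Fin.castSucc))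
        (extVec (bracket (Fs ∘ Fin.castSucc)) (Fs (Fin.last k)))).symm

private lemma oriV_mulVec {n : ℕ} (g : GL (Fin n) ℝ) (v : Fin n → (Fin n → ℝ)) :
    oriV (fun i => (g : Matrix (Fin n) (Fin n) ℝ) *ᵥ v i) = eps g * oriV v := by
  have hM : (Matrix.of fun i j => ((g : Matrix (Fin n) (Fin n) ℝ) *ᵥ v j) i)
      = (g : Matrix (Fin n) (Fin n) ℝ) * (Matrix.of fun i j => v j i) := by
    ext i j
    simp [Matrix.mul_apply, Matrix.mulVec, dotProduct]
  unfold oriV eps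
  rw [hM, Matrix.det_mul, mySign_mul]

private lemma eps_sq {n : ℕ} (g : GL (Fin n) ℝ) : eps g * eps g = 1 := by
  have hdet : (g : Matrix (Fin n) (Fin n) ℝ).det ≠ 0 := by
    have : IsUnit (g : Matrix (Fin n) (Fin n) ℝ) := ⟨g, rfl⟩
    exact ((Matrix.isUnit_iff_isUnit_det _).mp this).ne_zero
  rcases hdet.lt_or_gt with h | h
  · simp [eps, Real.sign_of_neg h]
  · simp [eps, Real.sign_of_pos h]

/-- for `g ∈ GL_n(ℝ)` and complete oriented flags (represented by bases,
the group acting by `g·v = g *ᵥ v` on representing vectors):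
`[gF_1,…,gF_k] = g[F_1,…,F_k]` as oriented subspaces (`1 ≤ k ≤ n`);
`ori(g[F_1,…,F_n]) = ε(g)·ori([F_1,…,F_n])`; and consequently
`coco(gF_0,…,gF_n) = ε(g)·coco(F_0,…,F_n)`. -/
theorem stmt8 (n : ℕ) (hn : 0 < n) (he : Even n) (g : GL (Fin n) ℝ) :
    (∀ (k : ℕ), 1 ≤ k → k ≤ n → ∀ Fs : Fin k → (Fin n → (Fin n → ℝ)),
      (∀ i, LinearIndependent ℝ (Fs i)) →
      bracket (fun i j => (g : Matrix (Fin n) (Fin n) ℝ) *ᵥ Fs i j) =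
        fun i => (g : Matrix (Fin n) (Fin n) ℝ) *ᵥ bracket Fs i) ∧
    (∀ Fs : Fin n → (Fin n → (Fin n → ℝ)), (∀ i, LinearIndependent ℝ (Fs i)) →
      oriV (fun i => (g : Matrix (Fin n) (Fin n) ℝ) *ᵥ bracket Fs i) =
        eps g * oriV (bracket Fs)) ∧
    (∀ Fs : Fin (n + 1) → (Fin n → (Fin n → ℝ)), (∀ i, LinearIndependent ℝ (Fs i)) →
      coco (fun i j => (g : Matrix (Fin n) (Fin n) ℝ) *ᵥ Fs i j) = eps g * coco Fs) := by
  refine ⟨fun k _ _ Fs _ => bracket_mulVec g Fs,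
    fun Fs _ => oriV_mulVec g (bracket Fs), ?_⟩
  intro Fs _
  have h2 : eps g ^ (n + 1) = eps g := by
    obtain ⟨m, hm⟩ := he
    have hpow : eps g ^ n = eps g ^ (m + m) := congrArg (eps g ^ ·) hm
    rw [pow_succ, hpow, pow_add, ← mul_pow, eps_sq, one_pow, one_mul]
  unfold coco
  calc ∏ i : Fin (n + 1),
        oriV (bracket ((fun i j => (g : Matrix (Fin n) (Fin n) ℝ) *ᵥ Fs i j) ∘ i.succAbove))
      = ∏ i : Fin (n + 1), eps g * oriV (bracket (Fs ∘ i.succAbove)) := by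
        refine Finset.prod_congr rfl fun i _ => ?_
        have h : bracket ((fun i j => (g : Matrix (Fin n) (Fin n) ℝ) *ᵥ Fs i j) ∘ i.succAbove)
            = fun a => (g : Matrix (Fin n) (Fin n) ℝ) *ᵥ bracket (Fs ∘ i.succAbove) a :=
          bracket_mulVec g (Fs ∘ i.succAbove)
        rw [h, oriV_mulVec]
    _ = eps g ^ (n + 1) * ∏ i : Fin (n + 1), oriV (bracket (Fs ∘ i.succAbove)) := by
        rw [Finset.prod_mul_distrib, Finset.prod_const, Finset.card_univ, Fintype.card_fin]
    _ = eps g * ∏ i : Fin (n + 1), oriV (bracket (Fs ∘ i.succAbove)) := by rw [h2]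


end
end

section
/- Let n be a positive even integer. For any complete oriented flags F_0,…,F_{n+1} in ℝⁿ, the coboundary of coco vanishes: ∑_{i=0}^{n+1} (−1)^i coco(F_0,…,F̂_i,…,F_{n+1}) = 0. -/
noncomputable section

def det2 (a b : ℝ × ℝ) : ℝ := a.1 * b.2 - a.2 * b.1

lemma det2_skew (a b : ℝ × ℝ) : det2 a b = - det2 b a := by simp [det2]; ring

def UHP (a : ℝ × ℝ) : Prop := 0 < a.2 ∨ (a.2 = 0 ∧ 0 < a.1)

lemma uhp_or (a : ℝ × ℝ) (ha : a ≠ 0) : UHP a ∨ UHP (-a) := by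
  rcases lt_trichotomy a.2 0 with h | h | h
  · right; left; simpa using h
  · rcases lt_trichotomy a.1 0 with h1 | h1 | h1
    · right; right; constructor <;> simpa using by simpa [h] using h1
    · exact absurd (Prod.ext h1 h) ha
    · left; right; exact ⟨h, h1⟩
  · left; left; exact h

lemma uhp_y_nonneg {a : ℝ × ℝ} (h : UHP a) : 0 ≤ a.2 := by
  rcases h with h | h
  · exact h.le
  · exact h.1.ge

lemma det2_cramer (u v w : ℝ × ℝ) :
    det2 u w * v.1 = det2 v w * u.1 + det2 u v * w.1 ∧
    det2 u w * v.2 = det2 v w * u.2 + det2 u v * w.2 := by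
  constructor <;> (simp [det2]; ring)

lemma uhp_trans {u v w : ℝ × ℝ} (hu : UHP u) (hv : UHP v) (hw : UHP w)
    (huv : 0 < det2 u v) (hvw : 0 < det2 v w) (huw : det2 u w ≠ 0) : 0 < det2 u w := by
  rcases huw.lt_or_gt with hlt | h
  · exfalso
    have h2 := (det2_cramer u v w).2
    have hu2 := uhp_y_nonneg hu
    have hv2 := uhp_y_nonneg hv
    have hw2 := uhp_y_nonneg hw
    -- det2 u w * v.2 = det2 v w * u.2 + det2 u v * w.2 ≥ 0, but LHS ≤ 0
    have hr : 0 ≤ det2 v w * u.2 + det2 u v * w.2 := by positivity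
    have hl : det2 u w * v.2 ≤ 0 := mul_nonpos_of_nonpos_of_nonneg hlt.le hv2
    have hz : det2 v w * u.2 + det2 u v * w.2 = 0 := le_antisymm (h2 ▸ hl) hr
    have hu2' : u.2 = 0 := by nlinarith
    have hw2' : w.2 = 0 := by nlinarith
    have : det2 u w = 0 := by
      rcases hu with h | h
      · rw [hu2'] at h; exact absurd h (lt_irrefl 0)
      · rcases hw with h' | h'
        · rw [hw2'] at h'; exact absurd h' (lt_irrefl 0)
        · simp [det2, hu2', hw2']
    exact huw this
  · exact h

lemma sign_pm_mul (s x : ℝ) (hs : s = 1 ∨ s = -1) :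
    Real.sign (s * x) = s * Real.sign x := by
  rcases hs with h | h <;> subst h <;> simp [Real.sign_neg]

lemma prod_sign_eq_neg_one_pow (s : Finset (Fin N)) (x : Fin N → ℝ) (hx : ∀ k ∈ s, x k ≠ 0) :
    (∏ k ∈ s, Real.sign (x k)) = (-1) ^ (s.filter (fun k => x k < 0)).card := by
  rw [← Finset.prod_filter_mul_prod_filter_not s (fun k => x k < 0)]
  have h1 : (∏ k ∈ s.filter (fun k => x k < 0), Real.sign (x k)) = (-1) ^ (s.filter (fun k => x k < 0)).card := by
    rw [Finset.prod_congr rfl (fun k hk => Real.sign_of_neg (Finset.mem_filter.mp hk).2), Finset.prod_const]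
  have h2 : (∏ k ∈ s.filter (fun k => ¬ x k < 0), Real.sign (x k)) = 1 := by
    rw [Finset.prod_congr rfl (fun k hk => Real.sign_of_pos ?_), Finset.prod_const, one_pow]
    rcases (hx k (Finset.mem_filter.mp hk).1).lt_or_gt with h | h
    · exact absurd h (Finset.mem_filter.mp hk).2
    · exact h
  rw [h1, h2, mul_one]

theorem lemmaR2 {N : ℕ} (hN : 2 ≤ N) (he : Even N) (p : Fin N → ℝ × ℝ)
    (hp : ∀ i k, i ≠ k → det2 (p i) (p k) ≠ 0) :
    ∑ i : Fin N, ∏ k ∈ Finset.univ.erase i, Real.sign (det2 (p i) (p k)) = 0 := by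
  classical
  have det2_self : ∀ a : ℝ × ℝ, det2 a a = 0 := fun a => by simp [det2]; ring
  set σ : Fin N → ℝ := fun i => if UHP (p i) then 1 else -1 with hσ
  have hσpm : ∀ i, σ i = 1 ∨ σ i = -1 := fun i => by
    by_cases h : UHP (p i) <;> simp [hσ, h]
  have hσsq : ∀ i, σ i * σ i = 1 := fun i => by
    rcases hσpm i with h | h <;> rw [h] <;> norm_num
  set q : Fin N → ℝ × ℝ := fun i => σ i • p i with hq
  have hdq : ∀ i k, det2 (q i) (q k) = σ i * σ k * det2 (p i) (p k) := by
    intro i k; simp [hq, det2, Prod.smul_fst, Prod.smul_snd, smul_eq_mul]; ring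
  have hdp : ∀ i k, det2 (p i) (p k) = σ i * σ k * det2 (q i) (q k) := by
    intro i k
    rcases hσpm i with h | h <;> rcases hσpm k with h' | h' <;> rw [hdq i k, h, h'] <;> ring
  have hq0 : ∀ i k, i ≠ k → det2 (q i) (q k) ≠ 0 := by
    intro i k hik
    rw [hdq]
    have h1 : σ i ≠ 0 := by rcases hσpm i with h | h <;> rw [h] <;> norm_num
    have h2 : σ k ≠ 0 := by rcases hσpm k with h | h <;> rw [h] <;> norm_num
    exact mul_ne_zero (mul_ne_zero h1 h2) (hp i k hik)
  have hqU : ∀ i, UHP (q i) := by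
    intro i
    obtain ⟨k, hk⟩ : ∃ k, k ≠ i :=
      Fintype.exists_ne_of_one_lt_card (by rw [Fintype.card_fin]; omega) i
    have hpne : p i ≠ 0 := by
      intro h0
      exact hp i k (Ne.symm hk) (by simp [h0, det2])
    by_cases h : UHP (p i)
    · simpa [hq, hσ, h] using h
    · rcases uhp_or (p i) hpne with h' | h'
      · exact absurd h' h
      · have : q i = - p i := by simp [hq, hσ, h]
        rw [this]; exact h'
  -- rewrite each term using q
  have key : ∀ i : Fin N, ∏ k ∈ Finset.univ.erase i, Real.sign (det2 (p i) (p k)) =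
      (∏ j, σ j) * ∏ k ∈ Finset.univ.erase i, Real.sign (det2 (q i) (q k)) := by
    intro i
    have h1 : ∀ k, Real.sign (det2 (p i) (p k)) = (σ i * σ k) * Real.sign (det2 (q i) (q k)) := by
      intro k
      rw [hdp i k, sign_pm_mul (σ i * σ k) _
        (by rcases hσpm i with h | h <;> rcases hσpm k with h' | h' <;> rw [h, h'] <;> norm_num)]
    calc ∏ k ∈ Finset.univ.erase i, Real.sign (det2 (p i) (p k))
        = ∏ k ∈ Finset.univ.erase i, ((σ i * σ k) * Real.sign (det2 (q i) (q k))) :=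
          Finset.prod_congr rfl (fun k _ => h1 k)
      _ = (∏ k ∈ Finset.univ.erase i, (σ i * σ k)) *
          ∏ k ∈ Finset.univ.erase i, Real.sign (det2 (q i) (q k)) := Finset.prod_mul_distrib
      _ = (∏ j, σ j) * ∏ k ∈ Finset.univ.erase i, Real.sign (det2 (q i) (q k)) := by
          congr 1
          rw [Finset.prod_mul_distrib, Finset.prod_const]
          have hcard : (Finset.univ.erase i).card = N - 1 := by
            rw [Finset.card_erase_of_mem (Finset.mem_univ i), Finset.card_univ, Fintype.card_fin]
          rw [hcard]
          have hN1 : N - 1 = (N - 2) + 1 := by omega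
          rw [hN1, pow_succ]
          have heven : σ i ^ (N - 2) = 1 := by
            rcases hσpm i with h | h
            · rw [h, one_pow]
            · rw [h]
              exact Even.neg_one_pow (by rcases he with ⟨m, hm⟩; exact ⟨m - 1, by omega⟩)
          rw [heven, one_mul, Finset.mul_prod_erase Finset.univ σ (Finset.mem_univ i)]
  rw [Finset.sum_congr rfl (fun i _ => key i), ← Finset.mul_sum]
  -- now show the normalized sum is zero
  have main : ∑ i : Fin N, ∏ k ∈ Finset.univ.erase i, Real.sign (det2 (q i) (q k)) = 0 := by
    set r : Fin N → ℕ := fun i => (Finset.univ.filter (fun k => 0 < det2 (q k) (q i))).card with hr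
    have hT : ∀ i, ∏ k ∈ Finset.univ.erase i, Real.sign (det2 (q i) (q k)) = (-1 : ℝ) ^ r i := by
      intro i
      rw [prod_sign_eq_neg_one_pow _ _ (fun k hk => hq0 i k (Ne.symm (Finset.mem_erase.mp hk).1))]
      congr 2
      ext k
      simp only [Finset.mem_filter, Finset.mem_erase, Finset.mem_univ, true_and, and_true]
      constructor
      · rintro ⟨hki, hneg⟩
        have := det2_skew (q i) (q k)
        linarith
      · intro hpos
        have hki : k ≠ i := by
          intro hcon; rw [hcon, det2_self] at hpos; exact lt_irrefl 0 hpos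
        have := det2_skew (q i) (q k)
        exact ⟨hki, by linarith⟩
    have hmono : ∀ i k, i ≠ k → 0 < det2 (q i) (q k) → r i < r k := by
      intro i k hik hpos
      have hsub : insert i (Finset.univ.filter (fun j => 0 < det2 (q j) (q i))) ⊆
          Finset.univ.filter (fun j => 0 < det2 (q j) (q k)) := by
        intro j hj
        rcases Finset.mem_insert.mp hj with hj | hj
        · subst hj; simp only [Finset.mem_filter, Finset.mem_univ, true_and]; exact hpos
        · have hji : 0 < det2 (q j) (q i) := (Finset.mem_filter.mp hj).2
          simp only [Finset.mem_filter, Finset.mem_univ, true_and]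
          have hjne_i : j ≠ i := by
            intro hcon; rw [hcon, det2_self] at hji; exact lt_irrefl 0 hji
          have hjne_k : j ≠ k := by
            intro hcon
            subst hcon
            have := det2_skew (q i) (q j)
            linarith
          exact uhp_trans (hqU j) (hqU i) (hqU k) hji hpos (hq0 j k hjne_k)
      have hnotmem : i ∉ Finset.univ.filter (fun j => 0 < det2 (q j) (q i)) := by
        simp [det2_self]
      calc r i < r i + 1 := Nat.lt_succ_self _
        _ = (insert i (Finset.univ.filter (fun j => 0 < det2 (q j) (q i)))).card := by
            rw [Finset.card_insert_of_notMem hnotmem, hr]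
        _ ≤ r k := Finset.card_le_card hsub
    have hinj : Function.Injective r := by
      intro i k hrik
      by_contra hik
      rcases (hq0 i k hik).lt_or_gt with h | h
      · have hsk := det2_skew (q i) (q k)
        have hki : 0 < det2 (q k) (q i) := by linarith
        have := hmono k i (Ne.symm hik) hki
        omega
      · have := hmono i k hik h
        omega
    have hlt : ∀ i, r i < N := by
      intro i
      have : (Finset.univ.filter (fun k => 0 < det2 (q k) (q i))) ⊆ Finset.univ.erase i := by
        intro k hk
        refine Finset.mem_erase.mpr ⟨?_, Finset.mem_univ k⟩
        intro hcon
        have := (Finset.mem_filter.mp hk).2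
        rw [hcon, det2_self] at this
        exact lt_irrefl 0 this
      calc r i ≤ (Finset.univ.erase i).card := Finset.card_le_card this
        _ = N - 1 := by rw [Finset.card_erase_of_mem (Finset.mem_univ i), Finset.card_univ, Fintype.card_fin]
        _ < N := by omega
    have himg : Finset.univ.image r = Finset.range N := by
      apply Finset.eq_of_subset_of_card_le
      · intro m hm
        rcases Finset.mem_image.mp hm with ⟨i, _, hi⟩
        exact Finset.mem_range.mpr (hi ▸ hlt i)
      · rw [Finset.card_range, Finset.card_image_of_injective _ hinj, Finset.card_univ, Fintype.card_fin]
    calc ∑ i : Fin N, ∏ k ∈ Finset.univ.erase i, Real.sign (det2 (q i) (q k))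
        = ∑ i : Fin N, (-1 : ℝ) ^ r i := Finset.sum_congr rfl (fun i _ => hT i)
      _ = ∑ m ∈ Finset.univ.image r, (-1 : ℝ) ^ m := by
          rw [Finset.sum_image (fun a _ b _ h => hinj h)]
      _ = ∑ m ∈ Finset.range N, (-1 : ℝ) ^ m := by rw [himg]
      _ = 0 := by rw [neg_one_geom_sum, if_pos he]
  rw [main, mul_zero]



/-- determinant of the matrix whose ROWS are the vectors `y 0, …` -/
def dets {n : ℕ} (y : Fin n → Fin n → ℝ) : ℝ := (Matrix.of y).det

lemma strictMono_eq_of_range_eq {m M : ℕ} {f g : Fin m → Fin M} (hf : StrictMono f)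
    (hg : StrictMono g) (h : ∀ x, (∃ a, f a = x) ↔ (∃ a, g a = x)) : f = g := by
  classical
  set s : Finset (Fin M) := Finset.univ.image f with hs
  have hcard : s.card = m := by
    rw [hs, Finset.card_image_of_injective _ hf.injective, Finset.card_univ, Fintype.card_fin]
  have hfs : ∀ x, f x ∈ s := fun x => Finset.mem_image.mpr ⟨x, Finset.mem_univ x, rfl⟩
  have hgs : ∀ x, g x ∈ s := by
    intro x
    obtain ⟨a, ha⟩ := (h (g x)).mpr ⟨x, rfl⟩
    exact ha ▸ hfs a
  rw [Finset.orderEmbOfFin_unique hcard hfs hf, Finset.orderEmbOfFin_unique hcard hgs hg]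

lemma range_succAbove_comp {m : ℕ} (i : Fin (m + 2)) (j : Fin (m + 1)) (x : Fin (m + 2)) :
    (∃ a, i.succAbove (j.succAbove a) = x) ↔ (x ≠ i ∧ x ≠ i.succAbove j) := by
  constructor
  · rintro ⟨a, rfl⟩
    exact ⟨Fin.succAbove_ne i _, fun hcon =>
      Fin.succAbove_ne j a (Fin.succAbove_right_injective hcon)⟩
  · rintro ⟨h1, h2⟩
    obtain ⟨y, hy⟩ := Fin.exists_succAbove_eq h1
    have hyj : y ≠ j := by
      intro hcon
      subst hcon
      exact h2 hy.symm
    obtain ⟨a, ha⟩ := Fin.exists_succAbove_eq hyj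
    exact ⟨a, by rw [ha, hy]⟩

/-- The simplicial symmetry: the increasing enumeration of the complement of `{i, k}`. -/
lemma sym_lemma {m : ℕ} (i k : Fin (m + 2)) (hik : i ≠ k) :
    ∃ (j j' : Fin (m + 1)), i.succAbove j = k ∧ k.succAbove j' = i ∧
      (i.succAbove ∘ j.succAbove = k.succAbove ∘ j'.succAbove) ∧
      ((j : ℕ) + (j' : ℕ) + 1 = (i : ℕ) + (k : ℕ)) := by
  obtain ⟨j, hj⟩ := Fin.exists_succAbove_eq (Ne.symm hik)
  obtain ⟨j', hj'⟩ := Fin.exists_succAbove_eq hik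
  refine ⟨j, j', hj, hj', ?_, ?_⟩
  · apply strictMono_eq_of_range_eq
    · exact (Fin.strictMono_succAbove i).comp (Fin.strictMono_succAbove j)
    · exact (Fin.strictMono_succAbove k).comp (Fin.strictMono_succAbove j')
    · intro x
      rw [show (∃ a, (i.succAbove ∘ j.succAbove) a = x) ↔ _ from range_succAbove_comp i j x,
          show (∃ a, (k.succAbove ∘ j'.succAbove) a = x) ↔ _ from range_succAbove_comp k j' x,
          hj, hj']
      constructor
      · rintro ⟨h1, h2⟩; exact ⟨h2, h1⟩
      · rintro ⟨h1, h2⟩; exact ⟨h2, h1⟩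
  · -- value computation
    have hvi := i.isLt
    have hvk := k.isLt
    rcases lt_or_gt_of_ne (fun hcon : (i : ℕ) = (k : ℕ) => hik (Fin.ext hcon)) with h | h
    · -- i < k
      have h1 : (j : ℕ) + 1 = (k : ℕ) := by
        by_cases hc : j.castSucc < i
        · exfalso
          rw [Fin.succAbove_of_castSucc_lt i j hc] at hj
          have : (j : ℕ) < (i : ℕ) := hc
          have : (k : ℕ) = (j : ℕ) := by rw [← hj]; rfl
          omega
        · rw [Fin.succAbove_of_le_castSucc i j (le_of_not_gt hc)] at hj
          rw [← hj]; rfl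
      have h2 : (j' : ℕ) = (i : ℕ) := by
        by_cases hc : j'.castSucc < k
        · rw [Fin.succAbove_of_castSucc_lt k j' hc] at hj'
          rw [← hj']; rfl
        · exfalso
          rw [Fin.succAbove_of_le_castSucc k j' (le_of_not_gt hc)] at hj'
          have hge : (k : ℕ) ≤ (j' : ℕ) := le_of_not_gt hc
          have : (i : ℕ) = (j' : ℕ) + 1 := by rw [← hj']; rfl
          omega
      omega
    · -- k < i
      have h1 : (j : ℕ) = (k : ℕ) := by
        by_cases hc : j.castSucc < i
        · rw [Fin.succAbove_of_castSucc_lt i j hc] at hj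
          rw [← hj]; rfl
        · exfalso
          rw [Fin.succAbove_of_le_castSucc i j (le_of_not_gt hc)] at hj
          have hge : (i : ℕ) ≤ (j : ℕ) := le_of_not_gt hc
          have : (k : ℕ) = (j : ℕ) + 1 := by rw [← hj]; rfl
          omega
      have h2 : (j' : ℕ) + 1 = (i : ℕ) := by
        by_cases hc : j'.castSucc < k
        · exfalso
          rw [Fin.succAbove_of_castSucc_lt k j' hc] at hj'
          have : (j' : ℕ) < (k : ℕ) := hc
          have : (i : ℕ) = (j' : ℕ) := by rw [← hj']; rfl
          omega
        · rw [Fin.succAbove_of_le_castSucc k j' (le_of_not_gt hc)] at hj'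
          rw [← hj']; rfl
      omega

/-- Cramer-type relation: for `n+1` vectors in `ℝⁿ`, the alternating-minor coefficients
give a linear relation. -/
lemma cramer_rel {n : ℕ} (w : Fin (n + 1) → Fin n → ℝ) (r : Fin n) :
    ∑ j : Fin (n + 1), (-1 : ℝ) ^ (j : ℕ) * dets (w ∘ j.succAbove) * w j r = 0 := by
  classical
  set B : Matrix (Fin (n + 1)) (Fin (n + 1)) ℝ :=
    Matrix.of (Fin.cons (fun b => w b r) (fun s b => w b s)) with hB
  have hrows : B 0 = B r.succ := by
    funext b
    simp [hB, Fin.cons_zero, Fin.cons_succ]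
  have hdet0 : B.det = 0 := Matrix.det_zero_of_row_eq (Fin.succ_ne_zero r).symm hrows
  have hexp := Matrix.det_succ_row_zero B
  have hsub : ∀ j : Fin (n + 1), (B.submatrix Fin.succ j.succAbove).det = dets (w ∘ j.succAbove) := by
    intro j
    have : B.submatrix Fin.succ j.succAbove = (Matrix.of (w ∘ j.succAbove)).transpose := by
      ext a b
      simp [hB, Matrix.submatrix_apply, Fin.cons_succ, Matrix.transpose_apply]
    rw [this, Matrix.det_transpose, dets]
  have hB0 : ∀ j : Fin (n + 1), B 0 j = w j r := fun j => by simp [hB, Fin.cons_zero]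
  calc ∑ j : Fin (n + 1), (-1 : ℝ) ^ (j : ℕ) * dets (w ∘ j.succAbove) * w j r
      = ∑ j : Fin (n + 1), (-1 : ℝ) ^ (j : ℕ) * B 0 j * (B.submatrix Fin.succ j.succAbove).det := by
        refine Finset.sum_congr rfl (fun j _ => ?_)
        rw [hsub j, hB0 j]; ring
    _ = B.det := hexp.symm
    _ = 0 := hdet0


lemma real_sign_mul (x y : ℝ) : Real.sign (x * y) = Real.sign x * Real.sign y := by
  rcases lt_trichotomy x 0 with hx | hx | hx
  · rcases lt_trichotomy y 0 with hy | hy | hy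
    · rw [Real.sign_of_pos (mul_pos_of_neg_of_neg hx hy), Real.sign_of_neg hx,
        Real.sign_of_neg hy]; norm_num
    · rw [hy, mul_zero, Real.sign_zero, mul_zero]
    · rw [Real.sign_of_neg (mul_neg_of_neg_of_pos hx hy), Real.sign_of_neg hx,
        Real.sign_of_pos hy]; norm_num
  · rw [hx, zero_mul, Real.sign_zero, zero_mul]
  · rcases lt_trichotomy y 0 with hy | hy | hy
    · rw [Real.sign_of_neg (mul_neg_of_pos_of_neg hx hy), Real.sign_of_pos hx,
        Real.sign_of_neg hy]; norm_num
    · rw [hy, mul_zero, Real.sign_zero, mul_zero]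
    · rw [Real.sign_of_pos (mul_pos hx hy), Real.sign_of_pos hx, Real.sign_of_pos hy]; norm_num

lemma real_sign_pm {x : ℝ} (hx : x ≠ 0) : Real.sign x = 1 ∨ Real.sign x = -1 := by
  rcases hx.lt_or_gt with h | h
  · right; exact Real.sign_of_neg h
  · left; exact Real.sign_of_pos h

lemma neg_one_pow_pm (e : ℕ) : ((-1 : ℝ) ^ e = 1 ∨ (-1 : ℝ) ^ e = -1) := by
  rcases Nat.even_or_odd e with h | h
  · left; exact h.neg_one_pow
  · right; exact h.neg_one_pow

lemma real_sign_sq_pos {x : ℝ} (hx : x ≠ 0) : Real.sign (x ^ 2) = 1 :=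
  Real.sign_of_pos (by positivity)

theorem lemmaC {n : ℕ} (hn : 0 < n) (he : Even n) (u : Fin (n + 2) → Fin n → ℝ)
    (hu : ∀ (i : Fin (n + 2)) (j : Fin (n + 1)), dets (u ∘ i.succAbove ∘ j.succAbove) ≠ 0) :
    ∑ i : Fin (n + 2), (-1 : ℝ) ^ (i : ℕ) *
      ∏ j : Fin (n + 1), Real.sign (dets (u ∘ i.succAbove ∘ j.succAbove)) = 0 := by
  classical
  set Λ : Fin (n + 2) → Fin (n + 2) → ℝ := fun i k =>
    ∑ j : Fin (n + 1), if i.succAbove j = k then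
      (-1 : ℝ) ^ (j : ℕ) * dets (u ∘ i.succAbove ∘ j.succAbove) else 0 with hΛ
  have hΛs : ∀ (i : Fin (n + 2)) (j : Fin (n + 1)),
      Λ i (i.succAbove j) = (-1 : ℝ) ^ (j : ℕ) * dets (u ∘ i.succAbove ∘ j.succAbove) := by
    intro i j
    simp only [hΛ]
    rw [Finset.sum_eq_single j]
    · rw [if_pos rfl]
    · intro j' _ hne
      exact if_neg (fun hcon => hne (Fin.succAbove_right_injective hcon))
    · intro h; exact absurd (Finset.mem_univ j) h
  have hΛd : ∀ i, Λ i i = 0 := by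
    intro i; simp only [hΛ]
    exact Finset.sum_eq_zero (fun j _ => if_neg (Fin.succAbove_ne i j))
  have hΛne : ∀ i k, i ≠ k → Λ i k ≠ 0 := by
    intro i k hik
    obtain ⟨j, hj⟩ := Fin.exists_succAbove_eq (Ne.symm hik)
    rw [← hj, hΛs]
    refine mul_ne_zero ?_ (hu i j)
    rcases neg_one_pow_pm (j : ℕ) with h | h <;> rw [h] <;> norm_num
  have hker : ∀ (i : Fin (n + 2)) (r : Fin n), ∑ k : Fin (n + 2), Λ i k * u k r = 0 := by
    intro i r
    have hcr := cramer_rel (u ∘ i.succAbove) r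
    calc ∑ k, Λ i k * u k r
        = ∑ k, ∑ j : Fin (n + 1), (if i.succAbove j = k then
            (-1 : ℝ) ^ (j : ℕ) * dets (u ∘ i.succAbove ∘ j.succAbove) else 0) * u k r := by
          refine Finset.sum_congr rfl fun k _ => ?_
          simp only [hΛ]
          rw [Finset.sum_mul]
      _ = ∑ j : Fin (n + 1), ∑ k, (if i.succAbove j = k then
            (-1 : ℝ) ^ (j : ℕ) * dets (u ∘ i.succAbove ∘ j.succAbove) else 0) * u k r :=
          Finset.sum_comm
      _ = ∑ j : Fin (n + 1), (-1 : ℝ) ^ (j : ℕ) * dets (u ∘ i.succAbove ∘ j.succAbove) *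
            u (i.succAbove j) r := by
          refine Finset.sum_congr rfl fun j _ => ?_
          rw [Finset.sum_eq_single (i.succAbove j)]
          · rw [if_pos rfl]
          · intro k _ hne; rw [if_neg (fun hcon => hne hcon.symm), zero_mul]
          · intro h; exact absurd (Finset.mem_univ _) h
      _ = 0 := hcr
  have h01 : (0 : Fin (n + 2)) ≠ 1 := by
    intro h
    have := congrArg Fin.val h
    simp [Fin.val_one] at this
  have hΛ10 : Λ 1 0 ≠ 0 := hΛne 1 0 (Ne.symm h01)
  have hΛ01 : Λ 0 1 ≠ 0 := hΛne 0 1 h01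
  set a : Fin (n + 2) → ℝ := fun i => Λ i 1 / Λ 0 1 with ha
  set b : Fin (n + 2) → ℝ := fun i => Λ i 0 / Λ 1 0 with hb
  have hind : LinearIndependent ℝ (fun l : Fin n => u l.succ.succ) := by
    have h00 := hu 0 0
    have hmap : (u ∘ (0 : Fin (n + 2)).succAbove ∘ (0 : Fin (n + 1)).succAbove) =
        (fun l : Fin n => u l.succ.succ) := by
      funext l
      simp [Function.comp, Fin.zero_succAbove]
    rw [hmap] at h00
    have := Matrix.linearIndependent_rows_iff_isUnit
      (A := Matrix.of (fun l : Fin n => u l.succ.succ)) (K := ℝ)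
    rw [Matrix.isUnit_iff_isUnit_det] at this
    simpa using this.mpr (isUnit_iff_ne_zero.mpr h00)
  have hspan : ∀ i k, Λ i k = a i * Λ 0 k + b i * Λ 1 k := by
    intro i k
    set z : Fin (n + 2) → ℝ := fun k => Λ i k - a i * Λ 0 k - b i * Λ 1 k with hz
    suffices hz0 : ∀ k, z k = 0 by
      have := hz0 k
      rw [hz] at this
      simp only at this
      linarith
    have hz00 : z 0 = 0 := by
      rw [hz]
      simp only
      rw [hΛd 0, hb]
      field_simp
      ring
    have hz01 : z 1 = 0 := by
      rw [hz]
      simp only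
      rw [hΛd 1, ha]
      field_simp
      ring
    have hzker : ∀ r : Fin n, ∑ k : Fin (n + 2), z k * u k r = 0 := by
      intro r
      have e1 := hker i r
      have e2 := hker 0 r
      have e3 := hker 1 r
      calc ∑ k : Fin (n + 2), z k * u k r
          = ∑ k : Fin (n + 2), (Λ i k * u k r - a i * (Λ 0 k * u k r) - b i * (Λ 1 k * u k r)) := by
            refine Finset.sum_congr rfl fun k _ => ?_
            rw [hz]; ring
        _ = (∑ k : Fin (n + 2), Λ i k * u k r) - a i * (∑ k : Fin (n + 2), Λ 0 k * u k r)
            - b i * (∑ k : Fin (n + 2), Λ 1 k * u k r) := by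
            rw [Finset.sum_sub_distrib, Finset.sum_sub_distrib, Finset.mul_sum, Finset.mul_sum]
        _ = 0 := by rw [e1, e2, e3]; ring
    have hzsucc : ∀ l : Fin n, z l.succ.succ = 0 := by
      have hsum : ∑ l : Fin n, z l.succ.succ • (fun r => u l.succ.succ r) = (0 : Fin n → ℝ) := by
        funext r
        have hexp : ∑ k : Fin (n + 2), z k * u k r
            = z 0 * u 0 r + z 1 * u 1 r + ∑ l : Fin n, z l.succ.succ * u l.succ.succ r := by
          rw [Fin.sum_univ_succ, Fin.sum_univ_succ, Fin.succ_zero_eq_one]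
          ring
        have hzk := hzker r
        rw [hexp, hz00, hz01] at hzk
        simp only [zero_mul, zero_add] at hzk
        simpa using hzk
      exact fun l => (Fintype.linearIndependent_iff.mp hind (fun l => z l.succ.succ) hsum) l
    intro k
    rcases Fin.eq_zero_or_eq_succ k with hk | ⟨k1, hk1⟩
    · rw [hk]; exact hz00
    · rcases Fin.eq_zero_or_eq_succ k1 with hk2 | ⟨k2, hk2⟩
      · rw [hk1, hk2]; exact hz01
      · rw [hk1, hk2]; exact hzsucc k2
  set p : Fin (n + 2) → ℝ × ℝ := fun k => (Λ 0 k, Λ 1 k) with hp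
  have hdot : ∀ i k, Λ i k = a i * (p k).1 + b i * (p k).2 := by
    intro i k; rw [hspan i k]
  have hp2 : ∀ i, (p i).1 ^ 2 + (p i).2 ^ 2 ≠ 0 := by
    intro i
    by_cases hi : i = 0
    · subst hi
      have h2 : (p 0).2 ≠ 0 := hΛ10
      positivity
    · have h2 : (p i).1 ≠ 0 := hΛne 0 i (Ne.symm hi)
      positivity
  set κ : Fin (n + 2) → ℝ := fun i => det2 (p i) (a i, b i) / ((p i).1 ^ 2 + (p i).2 ^ 2) with hκdef
  have hκ : ∀ i k, Λ i k = κ i * det2 (p i) (p k) := by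
    intro i k
    have horth : a i * (p i).1 + b i * (p i).2 = 0 := by
      rw [← hdot]; exact hΛd i
    have hid : ((p i).1 ^ 2 + (p i).2 ^ 2) * (a i * (p k).1 + b i * (p k).2)
        = det2 (p i) (a i, b i) * det2 (p i) (p k)
          + (a i * (p i).1 + b i * (p i).2) * ((p i).1 * (p k).1 + (p i).2 * (p k).2) := by
      simp only [det2]
      ring
    rw [horth, zero_mul, add_zero] at hid
    have hκi : κ i * ((p i).1 ^ 2 + (p i).2 ^ 2) = det2 (p i) (a i, b i) := by
      simp only [hκdef]
      exact div_mul_cancel₀ _ (hp2 i)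
    refine mul_right_cancel₀ (hp2 i) ?_
    rw [hdot i k]
    calc (a i * (p k).1 + b i * (p k).2) * ((p i).1 ^ 2 + (p i).2 ^ 2)
        = det2 (p i) (a i, b i) * det2 (p i) (p k) := by linarith [hid]
      _ = (κ i * ((p i).1 ^ 2 + (p i).2 ^ 2)) * det2 (p i) (p k) := by rw [hκi]
      _ = κ i * det2 (p i) (p k) * ((p i).1 ^ 2 + (p i).2 ^ 2) := by ring
  have hdet2ne : ∀ i k, i ≠ k → κ i * det2 (p i) (p k) ≠ 0 := by
    intro i k hik
    rw [← hκ]; exact hΛne i k hik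
  have hκne : ∀ i, κ i ≠ 0 := by
    intro i
    obtain ⟨k, hk⟩ := Fintype.exists_ne_of_one_lt_card (by rw [Fintype.card_fin]; omega) i
    exact fun hcon => hdet2ne i k (Ne.symm hk) (by rw [hcon, zero_mul])
  have hpdet : ∀ i k, i ≠ k → det2 (p i) (p k) ≠ 0 := by
    intro i k hik
    exact fun hcon => hdet2ne i k hik (by rw [hcon, mul_zero])
  have hconst : ∀ i k : Fin (n + 2), (-1 : ℝ) ^ (i : ℕ) * Real.sign (κ i)
      = (-1 : ℝ) ^ (k : ℕ) * Real.sign (κ k) := by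
    intro i k
    by_cases hik : i = k
    · rw [hik]
    obtain ⟨j, j', hj, hj', hcomp, hpar⟩ := sym_lemma i k hik
    have e1 : Λ i k = (-1 : ℝ) ^ (j : ℕ) * dets (u ∘ i.succAbove ∘ j.succAbove) := by
      rw [← hj, hΛs]
    have e2 : Λ k i = (-1 : ℝ) ^ (j' : ℕ) * dets (u ∘ i.succAbove ∘ j.succAbove) := by
      have hthis := hΛs k j'
      rw [hj'] at hthis
      rw [hthis, show u ∘ k.succAbove ∘ j'.succAbove = u ∘ i.succAbove ∘ j.succAbove from
        congrArg (fun g => u ∘ g) hcomp.symm]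
    have hskew : det2 (p k) (p i) = - det2 (p i) (p k) := by rw [det2_skew]
    have eqE : κ i * κ k * (det2 (p i) (p k)) ^ 2
        = (-1 : ℝ) ^ ((i : ℕ) + (k : ℕ)) * (dets (u ∘ i.succAbove ∘ j.succAbove)) ^ 2 := by
      have h1 : Λ i k * Λ k i = (-1 : ℝ) ^ ((j : ℕ) + (j' : ℕ)) *
          (dets (u ∘ i.succAbove ∘ j.succAbove)) ^ 2 := by
        rw [e1, e2, pow_add]; ring
      have h2 : Λ i k * Λ k i = - (κ i * κ k * (det2 (p i) (p k)) ^ 2) := by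
        rw [hκ i k, hκ k i, hskew]; ring
      have h3 : (-1 : ℝ) ^ ((i : ℕ) + (k : ℕ)) = - (-1 : ℝ) ^ ((j : ℕ) + (j' : ℕ)) := by
        rw [← hpar, pow_succ]; ring
      rw [h3]
      rw [h1] at h2
      linarith
    have hsgn := congrArg Real.sign eqE
    rw [real_sign_mul, real_sign_mul, real_sign_sq_pos (hpdet i k hik),
        sign_pm_mul _ _ (neg_one_pow_pm _), real_sign_sq_pos (hu i j), mul_one, mul_one] at hsgn
    have hsq : Real.sign (κ k) * Real.sign (κ k) = 1 := by
      rcases real_sign_pm (hκne k) with h | h <;> rw [h] <;> norm_num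
    have hii : (-1 : ℝ) ^ (i : ℕ) * (-1 : ℝ) ^ (i : ℕ) = 1 := by
      rw [← pow_add]; exact Even.neg_one_pow ⟨(i : ℕ), rfl⟩
    have hs2 : Real.sign (κ i) = (-1 : ℝ) ^ ((i : ℕ) + (k : ℕ)) * Real.sign (κ k) := by
      have hmul := congrArg (fun t => t * Real.sign (κ k)) hsgn
      rw [mul_assoc, hsq, mul_one] at hmul
      exact hmul
    rw [hs2, pow_add, ← mul_assoc, ← mul_assoc, hii, one_mul]
  -- final assembly
  set c1 : ℝ := ∏ j : Fin (n + 1), (-1 : ℝ) ^ (j : ℕ) with hc1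
  set c2 : ℝ := Real.sign (κ 0) with hc2
  have hterm : ∀ i : Fin (n + 2), (-1 : ℝ) ^ (i : ℕ) *
      ∏ j : Fin (n + 1), Real.sign (dets (u ∘ i.succAbove ∘ j.succAbove))
      = c1 * c2 * ∏ k ∈ Finset.univ.erase i, Real.sign (det2 (p i) (p k)) := by
    intro i
    have hfac : ∀ j : Fin (n + 1), Real.sign (dets (u ∘ i.succAbove ∘ j.succAbove))
        = (-1 : ℝ) ^ (j : ℕ) * (Real.sign (κ i) * Real.sign (det2 (p i) (p (i.succAbove j)))) := by
      intro j
      have hD : dets (u ∘ i.succAbove ∘ j.succAbove) = (-1 : ℝ) ^ (j : ℕ) * Λ i (i.succAbove j) := by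
        rw [hΛs, ← mul_assoc]
        have h2 : (-1 : ℝ) ^ (j : ℕ) * (-1 : ℝ) ^ (j : ℕ) = 1 := by
          rw [← pow_add]; exact Even.neg_one_pow ⟨(j : ℕ), rfl⟩
        rw [h2, one_mul]
      rw [hD, sign_pm_mul _ _ (neg_one_pow_pm _), hκ i (i.succAbove j), real_sign_mul]
    calc (-1 : ℝ) ^ (i : ℕ) * ∏ j : Fin (n + 1), Real.sign (dets (u ∘ i.succAbove ∘ j.succAbove))
        = (-1 : ℝ) ^ (i : ℕ) * ∏ j : Fin (n + 1), ((-1 : ℝ) ^ (j : ℕ) *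
            (Real.sign (κ i) * Real.sign (det2 (p i) (p (i.succAbove j))))) := by
          rw [Finset.prod_congr rfl (fun j _ => hfac j)]
      _ = (-1 : ℝ) ^ (i : ℕ) * (c1 * ((Real.sign (κ i)) ^ (n + 1) *
            ∏ j : Fin (n + 1), Real.sign (det2 (p i) (p (i.succAbove j))))) := by
          rw [Finset.prod_mul_distrib, Finset.prod_mul_distrib, Finset.prod_const,
            Finset.card_univ, Fintype.card_fin]
      _ = c1 * ((-1 : ℝ) ^ (i : ℕ) * Real.sign (κ i)) *
            ∏ j : Fin (n + 1), Real.sign (det2 (p i) (p (i.succAbove j))) := by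
          have hodd : (Real.sign (κ i)) ^ (n + 1) = Real.sign (κ i) := by
            rw [pow_succ]
            have : (Real.sign (κ i)) ^ n = 1 := by
              rcases real_sign_pm (hκne i) with h | h
              · rw [h, one_pow]
              · rw [h]; exact he.neg_one_pow
            rw [this, one_mul]
          rw [hodd]; ring
      _ = c1 * c2 * ∏ k ∈ Finset.univ.erase i, Real.sign (det2 (p i) (p k)) := by
          rw [hconst i 0]
          congr 1
          · rw [hc2]
            norm_num
          · refine Finset.prod_bij (fun j _ => i.succAbove j) ?_ ?_ ?_ ?_
            · intro j _
              exact Finset.mem_erase.mpr ⟨(Fin.succAbove_ne i j), Finset.mem_univ _⟩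
            · intro j1 _ j2 _ hcon
              exact Fin.succAbove_right_injective hcon
            · intro k hk
              obtain ⟨j, hj⟩ := Fin.exists_succAbove_eq (Finset.mem_erase.mp hk).1
              exact ⟨j, Finset.mem_univ j, hj⟩
            · intro j _
              rfl
  rw [Finset.sum_congr rfl (fun i _ => hterm i), ← Finset.mul_sum]
  rw [lemmaR2 (by omega) (by rcases he with ⟨m, hm⟩; exact ⟨m + 1, by omega⟩) p hpdet, mul_zero]

lemma oriV_eq_sign_dets {n : ℕ} (y : Fin n → Fin n → ℝ) : oriV y = Real.sign (dets y) := by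
  unfold oriV dets
  rw [show (Matrix.of fun i j => y j i) = (Matrix.of y).transpose from rfl, Matrix.det_transpose]

open Classical in
lemma extVec_spec {n k : ℕ} (W : Fin k → Fin n → ℝ) (F : Fin n → (Fin n → ℝ))
    (hex : ∃ j, F j ∉ Submodule.span ℝ (Set.range W)) :
    ∃ j : Fin n, extVec W F = F j ∧ F j ∉ Submodule.span ℝ (Set.range W) ∧
      ∀ j' : Fin n, j' < j → F j' ∈ Submodule.span ℝ (Set.range W) := by
  unfold extVec
  rw [dif_pos hex]
  refine ⟨_, rfl, Fin.find_spec hex, fun j' hj' => ?_⟩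
  exact not_not.mp (Fin.find_min hex hj')

lemma bracket_spec {n : ℕ} : ∀ (k : ℕ), k ≤ n → ∀ (F : Fin k → Fin n → (Fin n → ℝ)),
    (∀ l, LinearIndependent ℝ (F l)) →
    ∃ m : Fin k → Fin n,
      (∀ l, bracket F l = F l (m l)) ∧
      LinearIndependent ℝ (bracket F) ∧
      (∀ (l : Fin k) (m' : Fin n), m' < m l →
        F l m' ∈ Submodule.span ℝ (bracket F '' {t : Fin k | t < l})) := by
  intro k
  induction k with
  | zero =>
      intro hk F hF
      exact ⟨Fin.elim0, fun l => l.elim0, linearIndependent_empty_type, fun l => l.elim0⟩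
  | succ k IH =>
      intro hk F hF
      obtain ⟨m₀, hb, hli, hmin⟩ := IH (by omega) (F ∘ Fin.castSucc) (fun l => hF _)
      have hbr : bracket F = Fin.snoc (bracket (F ∘ Fin.castSucc))
          (extVec (bracket (F ∘ Fin.castSucc)) (F (Fin.last k))) := rfl
      have hspanne : Submodule.span ℝ (Set.range (bracket (F ∘ Fin.castSucc))) ≠ ⊤ := by
        intro hcon
        have h1 : Module.finrank ℝ
            ↥(Submodule.span ℝ (Set.range (bracket (F ∘ Fin.castSucc)))) ≤ k := by
          classical
          refine le_trans (finrank_span_le_card _) ?_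
          rw [Set.toFinset_range]
          exact le_trans (Finset.card_image_le) (by simp)
        rw [hcon, finrank_top] at h1
        have h2 : Module.finrank ℝ (Fin n → ℝ) = n := by simp
        omega
      have hex : ∃ j, F (Fin.last k) j ∉
          Submodule.span ℝ (Set.range (bracket (F ∘ Fin.castSucc))) := by
        by_contra hcon
        push_neg at hcon
        apply hspanne
        have htop : Submodule.span ℝ (Set.range (F (Fin.last k))) = ⊤ := by
          haveI : Nonempty (Fin n) := ⟨⟨0, by omega⟩⟩
          refine LinearIndependent.span_eq_top_of_card_eq_finrank (hF (Fin.last k)) ?_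
          simp
        rw [eq_top_iff, ← htop]
        refine Submodule.span_le.mpr ?_
        rintro x ⟨j, rfl⟩
        exact hcon j
      obtain ⟨j, hev, hnm, hjmin⟩ := extVec_spec _ _ hex
      refine ⟨Fin.snoc m₀ j, ?_, ?_, ?_⟩
      · intro l
        refine Fin.lastCases ?_ ?_ l
        · rw [hbr, Fin.snoc_last, Fin.snoc_last, hev]
        · intro t
          rw [hbr, Fin.snoc_castSucc, Fin.snoc_castSucc, hb t]
          rfl
      · rw [hbr]
        exact linearIndependent_fin_snoc.mpr ⟨hli, hev ▸ hnm⟩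
      · intro l
        refine Fin.lastCases ?_ ?_ l
        · intro m' hm'
          rw [Fin.snoc_last] at hm'
          refine Submodule.span_mono ?_ (hjmin m' hm')
          rintro x ⟨t, rfl⟩
          refine ⟨t.castSucc, Fin.castSucc_lt_last t, ?_⟩
          rw [hbr, Fin.snoc_castSucc]
        · intro t m' hm'
          rw [Fin.snoc_castSucc] at hm'
          have hIH := hmin t m' hm'
          refine Submodule.span_mono ?_ hIH
          rintro x ⟨s, hs, rfl⟩
          refine ⟨s.castSucc, ?_, ?_⟩
          · exact Fin.castSucc_lt_castSucc_iff.mpr hs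
          · rw [hbr, Fin.snoc_castSucc]

lemma dets_ne_zero_iff {n : ℕ} (y : Fin n → Fin n → ℝ) :
    dets y ≠ 0 ↔ LinearIndependent ℝ y := by
  rw [dets]
  constructor
  · intro h
    have := Matrix.linearIndependent_rows_iff_isUnit (A := Matrix.of y) (K := ℝ)
    rw [Matrix.isUnit_iff_isUnit_det] at this
    simpa using this.mpr (isUnit_iff_ne_zero.mpr h)
  · intro h
    have := Matrix.linearIndependent_rows_iff_isUnit (A := Matrix.of y) (K := ℝ)
    rw [Matrix.isUnit_iff_isUnit_det] at this
    have h2 : IsUnit (Matrix.of y).det := this.mp (by simpa using h)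
    exact isUnit_iff_ne_zero.mp h2

lemma geom_nat (n : ℕ) : ∀ M : ℕ,
    (n + 1) * (∑ s ∈ Finset.range M, (n + 2) ^ s) + 1 = (n + 2) ^ M := by
  intro M
  induction M with
  | zero => simp
  | succ M IH =>
      rw [Finset.sum_range_succ]
      calc (n + 1) * ((∑ s ∈ Finset.range M, (n + 2) ^ s) + (n + 2) ^ M) + 1
          = ((n + 1) * (∑ s ∈ Finset.range M, (n + 2) ^ s) + 1) + (n + 1) * (n + 2) ^ M := by
            ring
        _ = (n + 2) ^ M + (n + 1) * (n + 2) ^ M := by rw [IH]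
        _ = (n + 2) ^ (M + 1) := by rw [pow_succ]; ring

lemma dets_expand {n : ℕ} (e : Fin n → Fin n → ℝ) (H : Fin n → Fin n → Fin n → ℝ) :
    dets (fun k => ∑ m : Fin n, e k m • H k m)
      = ∑ f ∈ Fintype.piFinset (fun _ : Fin n => (Finset.univ : Finset (Fin n))),
          (∏ k, e k (f k)) * dets (fun k => H k (f k)) := by
  classical
  have h1 : dets (fun k => ∑ m : Fin n, e k m • H k m)
      = (Matrix.detRowAlternating (Matrix.of fun k => ∑ m : Fin n, e k m • H k m) : ℝ) := rfl
  rw [h1]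
  have h2 := (Matrix.detRowAlternating (R := ℝ) (n := Fin n)).toMultilinearMap.map_sum_finset
    (g := fun k m => e k m • H k m) (A := fun _ => Finset.univ)
  simp only [AlternatingMap.coe_multilinearMap] at h2
  rw [show (Matrix.of fun k => ∑ m : Fin n, e k m • H k m)
      = (fun k => ∑ m ∈ Finset.univ, e k m • H k m) from rfl]
  rw [h2]
  refine Finset.sum_congr rfl fun f _ => ?_
  have h3 := (Matrix.detRowAlternating (R := ℝ) (n := Fin n)).toMultilinearMap.map_smul_univ
    (fun k => e k (f k)) (fun k => H k (f k))
  simp only [AlternatingMap.coe_multilinearMap] at h3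
  rw [h3, smul_eq_mul]
  rfl

lemma perturb {n : ℕ} (hn : 0 < n) (H : Fin n → Fin n → Fin n → ℝ)
    (hH : ∀ k, LinearIndependent ℝ (H k)) (d : Fin n → ℕ)
    (hd : ∀ k : Fin n, ((n : ℕ) - 1) * (∑ l ∈ Finset.univ.filter (fun l => k < l), d l) < d k) :
    ∀ᶠ ε in nhdsWithin (0 : ℝ) (Set.Ioi 0),
      dets (fun k => ∑ m : Fin n, ε ^ ((m : ℕ) * d k) • H k m) ≠ 0 ∧
      Real.sign (dets (fun k => ∑ m : Fin n, ε ^ ((m : ℕ) * d k) • H k m))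
        = oriV (bracket H) := by
  classical
  obtain ⟨m, hbm, hli, hmin⟩ := bracket_spec n le_rfl H hH
  set W : (Fin n → Fin n) → ℕ := fun f => ∑ k, (f k : ℕ) * d k with hW
  set D : (Fin n → Fin n) → ℝ := fun f => dets (fun k => H k (f k)) with hD
  have hbrD : dets (bracket H) = D m := by
    rw [hD]
    congr 1
    funext l
    exact hbm l
  have hDm : D m ≠ 0 := by
    rw [← hbrD, dets_ne_zero_iff]
    exact hli
  -- weight-minimality of the greedy transversal
  have hWlt : ∀ f : Fin n → Fin n, D f ≠ 0 → f ≠ m → W m < W f := by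
    intro f hDf hfm
    have hlif : LinearIndependent ℝ (fun k => H k (f k)) := (dets_ne_zero_iff _).mp hDf
    have hne : (Finset.univ.filter (fun k => f k ≠ m k)).Nonempty := by
      rcases Finset.eq_empty_or_nonempty (Finset.univ.filter (fun k => f k ≠ m k)) with h | h
      · exfalso
        apply hfm
        funext k
        by_contra hcon
        exact absurd (Finset.mem_filter.mpr ⟨Finset.mem_univ k, hcon⟩) (h ▸ Finset.notMem_empty k)
      · exact h
    set k₀ := (Finset.univ.filter (fun k => f k ≠ m k)).min' hne with hk₀def
    have hk₀mem := (Finset.univ.filter (fun k => f k ≠ m k)).min'_mem hne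
    have hk₀ : f k₀ ≠ m k₀ := (Finset.mem_filter.mp hk₀mem).2
    have hagree : ∀ l, l < k₀ → f l = m l := by
      intro l hl
      by_contra hcon
      have := (Finset.univ.filter (fun k => f k ≠ m k)).min'_le l
        (Finset.mem_filter.mpr ⟨Finset.mem_univ l, hcon⟩)
      exact absurd hl (not_lt.mpr this)
    have hlt : m k₀ < f k₀ := by
      rcases lt_or_gt_of_ne hk₀ with h | h
      · exfalso
        have hmem := hmin k₀ (f k₀) h
        have himg : bracket H '' {t : Fin n | t < k₀}
            = (fun k => H k (f k)) '' {t : Fin n | t < k₀} := by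
          apply Set.image_congr
          intro t ht
          rw [hbm t, hagree t ht]
        rw [himg] at hmem
        have hnotmem : k₀ ∉ {t : Fin n | t < k₀} := fun hcon => lt_irrefl k₀ hcon
        exact absurd hmem (hlif.notMem_span_image hnotmem)
      · exact h
    -- sum splitting
    have hsplit : ∀ g : Fin n → ℕ, ∑ k, g k
        = (∑ l ∈ Finset.univ.filter (fun l => l < k₀), g l) + g k₀
          + ∑ l ∈ Finset.univ.filter (fun l => k₀ < l), g l := by
      intro g
      have hins : Finset.univ.filter (fun l => ¬ l < k₀)
          = insert k₀ (Finset.univ.filter (fun l => k₀ < l)) := by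
        ext l
        simp only [Finset.mem_filter, Finset.mem_univ, true_and, Finset.mem_insert]
        constructor
        · intro hnl
          rcases lt_trichotomy l k₀ with h | h | h
          · exact absurd h hnl
          · left; exact h
          · right; exact h
        · intro hl
          rcases hl with h | h
          · rw [h]; exact lt_irrefl k₀
          · exact not_lt.mpr (le_of_lt h)
      rw [← Finset.sum_filter_add_sum_filter_not Finset.univ (fun l => l < k₀) g, hins,
        Finset.sum_insert (by simp)]
      ring
    have hBm : ∑ l ∈ Finset.univ.filter (fun l => k₀ < l), ((m l : ℕ) * d l)
        ≤ (n - 1) * ∑ l ∈ Finset.univ.filter (fun l => k₀ < l), d l := by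
      rw [Finset.mul_sum]
      refine Finset.sum_le_sum fun l _ => ?_
      exact Nat.mul_le_mul_right _ (by have := (m l).isLt; omega)
    have hAm : ∑ l ∈ Finset.univ.filter (fun l => l < k₀), ((m l : ℕ) * d l)
        = ∑ l ∈ Finset.univ.filter (fun l => l < k₀), ((f l : ℕ) * d l) := by
      refine Finset.sum_congr rfl fun l hl => ?_
      rw [hagree l (Finset.mem_filter.mp hl).2]
    have hstep : (m k₀ : ℕ) * d k₀ + d k₀ ≤ (f k₀ : ℕ) * d k₀ := by
      have hv : (m k₀ : ℕ) < (f k₀ : ℕ) := Fin.lt_def.mp hlt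
      calc (m k₀ : ℕ) * d k₀ + d k₀ = ((m k₀ : ℕ) + 1) * d k₀ := by ring
        _ ≤ (f k₀ : ℕ) * d k₀ := Nat.mul_le_mul_right _ (by omega)
    have h1 := hsplit (fun k => (m k : ℕ) * d k)
    have h2 := hsplit (fun k => (f k : ℕ) * d k)
    have hcomb : ∑ l ∈ Finset.univ.filter (fun l => k₀ < l), ((m l : ℕ) * d l) < d k₀ :=
      lt_of_le_of_lt hBm (hd k₀)
    rw [hW]
    simp only
    have hBf : 0 ≤ ∑ l ∈ Finset.univ.filter (fun l => k₀ < l), ((f l : ℕ) * d l) := Nat.zero_le _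
    linarith [h1, h2, hAm, hcomb, hstep, hBf]
  -- expansion of the determinant as a polynomial
  have hexp : ∀ ε : ℝ, dets (fun k => ∑ m' : Fin n, ε ^ ((m' : ℕ) * d k) • H k m')
      = ∑ f ∈ Fintype.piFinset (fun _ : Fin n => (Finset.univ : Finset (Fin n))),
          ε ^ (W f) * D f := by
    intro ε
    rw [dets_expand]
    refine Finset.sum_congr rfl fun f _ => ?_
    congr 1
    rw [hW]
    simp only
    rw [← Finset.prod_pow_eq_pow_sum]
  set S : Finset (Fin n → Fin n) :=
    Fintype.piFinset (fun _ : Fin n => (Finset.univ : Finset (Fin n))) with hS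
  have hmS : m ∈ S := by simp [hS, Fintype.mem_piFinset]
  set g : ℝ → ℝ := fun ε =>
    D m + ∑ f ∈ S.erase m, (if D f = 0 then 0 else ε ^ (W f - W m) * D f) with hg
  have hgeq : ∀ ε : ℝ, 0 < ε → (∑ f ∈ S, ε ^ (W f) * D f) / ε ^ (W m) = g ε := by
    intro ε hε
    have hεne : (ε : ℝ) ≠ 0 := ne_of_gt hε
    rw [hg, ← Finset.add_sum_erase S (fun f => ε ^ (W f) * D f) hmS, add_div]
    congr 1
    · rw [mul_comm, mul_div_assoc, div_self (pow_ne_zero _ hεne), mul_one]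
    · rw [Finset.sum_div]
      refine Finset.sum_congr rfl fun f hf => ?_
      by_cases hDf : D f = 0
      · rw [if_pos hDf, hDf, mul_zero, zero_div]
      · rw [if_neg hDf]
        have hfm : f ≠ m := (Finset.mem_erase.mp hf).1
        have hWf := hWlt f hDf hfm
        have hpowsplit : ε ^ (W f) = ε ^ (W m) * ε ^ (W f - W m) := by
          rw [← pow_add]
          congr 1
          omega
        rw [hpowsplit, mul_assoc, mul_div_cancel_left₀ _ (pow_ne_zero _ hεne)]
  have hcg : Continuous g := by
    apply continuous_const.add
    apply continuous_finset_sum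
    intro f _
    by_cases hDf : D f = 0
    · simp only [if_pos hDf]; exact continuous_const
    · simp only [if_neg hDf]; exact (continuous_pow _).mul continuous_const
  have hg0 : g 0 = D m := by
    rw [hg]
    simp only
    rw [Finset.sum_eq_zero, add_zero]
    intro f hf
    by_cases hDf : D f = 0
    · rw [if_pos hDf]
    · rw [if_neg hDf]
      have hWf := hWlt f hDf (Finset.mem_erase.mp hf).1
      have hne0 : W f - W m ≠ 0 := by omega
      rw [zero_pow hne0, zero_mul]
  have htendg : Filter.Tendsto g (nhdsWithin 0 (Set.Ioi (0 : ℝ))) (nhds (D m)) := by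
    have := hcg.tendsto 0
    rw [hg0] at this
    exact this.mono_left nhdsWithin_le_nhds
  have htendP : Filter.Tendsto (fun ε => (∑ f ∈ S, ε ^ (W f) * D f) / ε ^ (W m))
      (nhdsWithin 0 (Set.Ioi (0 : ℝ))) (nhds (D m)) := by
    refine htendg.congr' ?_
    filter_upwards [self_mem_nhdsWithin] with ε hε
    exact (hgeq ε hε).symm
  filter_upwards [Metric.tendsto_nhds.mp htendP |D m| (abs_pos.mpr hDm),
    self_mem_nhdsWithin] with ε hdist hε
  have hεp : (0 : ℝ) < ε := hε
  have hpowp : (0 : ℝ) < ε ^ (W m) := pow_pos hεp _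
  have hval : dets (fun k => ∑ m' : Fin n, ε ^ ((m' : ℕ) * d k) • H k m')
      = ((∑ f ∈ S, ε ^ (W f) * D f) / ε ^ (W m)) * ε ^ (W m) := by
    rw [div_mul_cancel₀ _ (ne_of_gt hpowp), hexp ε]
  rw [Real.dist_eq] at hdist
  rw [oriV_eq_sign_dets, hbrD]
  rcases hDm.lt_or_gt with hneg | hpos
  · have hxneg : (∑ f ∈ S, ε ^ (W f) * D f) / ε ^ (W m) < 0 := by
      have h2 := (abs_lt.mp hdist).2
      have habs : |D m| = - D m := abs_of_neg hneg
      rw [habs] at h2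
      linarith
    refine ⟨?_, ?_⟩
    · rw [hval]; exact ne_of_lt (mul_neg_of_neg_of_pos hxneg hpowp)
    · rw [hval, Real.sign_of_neg (mul_neg_of_neg_of_pos hxneg hpowp), Real.sign_of_neg hneg]
  · have hxpos : 0 < (∑ f ∈ S, ε ^ (W f) * D f) / ε ^ (W m) := by
      have h1 := (abs_lt.mp hdist).1
      have habs : |D m| = D m := abs_of_pos hpos
      rw [habs] at h1
      linarith
    refine ⟨?_, ?_⟩
    · rw [hval]; exact ne_of_gt (mul_pos hxpos hpowp)
    · rw [hval, Real.sign_of_pos (mul_pos hxpos hpowp), Real.sign_of_pos hpos]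

lemma weight_ok {n : ℕ} (hn : 0 < n) (σ : Fin n → Fin (n + 2)) (hσ : StrictMono σ) (k : Fin n) :
    ((n : ℕ) - 1) * (∑ l ∈ Finset.univ.filter (fun l => k < l),
        (n + 2) ^ ((n + 2) - (σ l : ℕ)))
      < (n + 2) ^ ((n + 2) - (σ k : ℕ)) := by
  classical
  set K := (σ k : ℕ) with hK
  have h1 : ∑ l ∈ Finset.univ.filter (fun l => k < l), (n + 2) ^ ((n + 2) - (σ l : ℕ))
      ≤ ∑ s ∈ Finset.range ((n + 2) - K), (n + 2) ^ s := by
    have himg : ∑ l ∈ Finset.univ.filter (fun l => k < l), (n + 2) ^ ((n + 2) - (σ l : ℕ))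
        = ∑ s ∈ (Finset.univ.filter (fun l => k < l)).image
            (fun l => (n + 2) - (σ l : ℕ)), (n + 2) ^ s := by
      rw [Finset.sum_image]
      intro l1 _ l2 _ heq
      have e1 : (σ l1 : ℕ) < n + 2 := (σ l1).isLt
      have e2 : (σ l2 : ℕ) < n + 2 := (σ l2).isLt
      have heq' : (n + 2) - (σ l1 : ℕ) = (n + 2) - (σ l2 : ℕ) := heq
      have : (σ l1 : ℕ) = (σ l2 : ℕ) := by omega
      exact hσ.injective (Fin.ext this)
    rw [himg]
    apply Finset.sum_le_sum_of_subset
    intro s hs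
    rcases Finset.mem_image.mp hs with ⟨l, hl, rfl⟩
    have hkl : k < l := (Finset.mem_filter.mp hl).2
    have hv : K < (σ l : ℕ) := Fin.lt_def.mp (hσ hkl)
    have hlt2 : (σ l : ℕ) < n + 2 := (σ l).isLt
    exact Finset.mem_range.mpr (by omega)
  have h2 := geom_nat n ((n + 2) - K)
  calc ((n : ℕ) - 1) * (∑ l ∈ Finset.univ.filter (fun l => k < l),
          (n + 2) ^ ((n + 2) - (σ l : ℕ)))
      ≤ ((n : ℕ) - 1) * (∑ s ∈ Finset.range ((n + 2) - K), (n + 2) ^ s) :=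
        Nat.mul_le_mul_left _ h1
    _ ≤ (n + 1) * (∑ s ∈ Finset.range ((n + 2) - K), (n + 2) ^ s) :=
        Nat.mul_le_mul_right _ (by omega)
    _ < (n + 1) * (∑ s ∈ Finset.range ((n + 2) - K), (n + 2) ^ s) + 1 := Nat.lt_succ_self _
    _ = (n + 2) ^ ((n + 2) - K) := h2

/-- the coboundary of `coco` vanishes identically on `(n+2)`-tuples of
complete oriented flags: `∑_{i=0}^{n+1} (−1)^i coco(F_0,…,F̂_i,…,F_{n+1}) = 0`. -/
theorem stmt12 (n : ℕ) (hn : 0 < n) (he : Even n)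
    (Fs : Fin (n + 2) → (Fin n → (Fin n → ℝ))) (hFs : ∀ i, LinearIndependent ℝ (Fs i)) :
    ∑ i : Fin (n + 2), (-1 : ℝ) ^ (i : ℕ) * coco (Fs ∘ i.succAbove) = 0 := by
  classical
  set c : Fin (n + 2) → ℕ := fun t => (n + 2) ^ ((n + 2) - (t : ℕ)) with hc
  have hall : ∀ᶠ ε in nhdsWithin (0 : ℝ) (Set.Ioi 0), ∀ (i : Fin (n + 2)) (j : Fin (n + 1)),
      dets ((fun t => ∑ m : Fin n, ε ^ ((m : ℕ) * c t) • Fs t m) ∘ i.succAbove ∘ j.succAbove) ≠ 0 ∧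
      Real.sign (dets ((fun t => ∑ m : Fin n, ε ^ ((m : ℕ) * c t) • Fs t m)
          ∘ i.succAbove ∘ j.succAbove))
        = oriV (bracket (Fs ∘ i.succAbove ∘ j.succAbove)) := by
    rw [Filter.eventually_all]
    intro i
    rw [Filter.eventually_all]
    intro j
    have hσ : StrictMono (i.succAbove ∘ j.succAbove) :=
      (Fin.strictMono_succAbove i).comp (Fin.strictMono_succAbove j)
    exact perturb hn (Fs ∘ (i.succAbove ∘ j.succAbove)) (fun k => hFs _)
      (fun k => c ((i.succAbove ∘ j.succAbove) k)) (fun k => weight_ok hn _ hσ k)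
  obtain ⟨ε, hε⟩ := hall.exists
  set u : Fin (n + 2) → Fin n → ℝ := fun t => ∑ m : Fin n, ε ^ ((m : ℕ) * c t) • Fs t m with hu
  have h1 : ∀ (i : Fin (n + 2)) (j : Fin (n + 1)),
      dets (u ∘ i.succAbove ∘ j.succAbove) ≠ 0 := fun i j => (hε i j).1
  have h2 : ∀ (i : Fin (n + 2)) (j : Fin (n + 1)),
      Real.sign (dets (u ∘ i.succAbove ∘ j.succAbove))
        = oriV (bracket (Fs ∘ i.succAbove ∘ j.succAbove)) := fun i j => (hε i j).2
  have hC := lemmaC hn he u h1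
  calc ∑ i : Fin (n + 2), (-1 : ℝ) ^ (i : ℕ) * coco (Fs ∘ i.succAbove)
      = ∑ i : Fin (n + 2), (-1 : ℝ) ^ (i : ℕ) *
          ∏ j : Fin (n + 1), Real.sign (dets (u ∘ i.succAbove ∘ j.succAbove)) := by
        refine Finset.sum_congr rfl fun i _ => ?_
        congr 1
        show ∏ j : Fin (n + 1), oriV (bracket ((Fs ∘ i.succAbove) ∘ j.succAbove)) = _
        exact Finset.prod_congr rfl fun j _ => (h2 i j).symm
    _ = 0 := hC

end
end
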